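/- Let S = {s₁,…,sₙ} be a finite independent generating subset of an abelian group G, let A ⊆ G be finite, and let i, j ∈ [1,n]. Then |{a ∈ [A]_i : a + s_j ∉ [A]_i}| ≤ |{a ∈ A : a + s_j ∉ A}|. -/

import Mathlib

/-- A finite subset `S` of an abelian group is independent if whenever an integral linear
combination `∑_{s ∈ S} k(s)·s` vanishes, every summand `k(s)·s` vanishes. -/
def IsIndependent {G : Type*} [AddCommGroup G] (S : Finset G) : Prop :=
  ∀ k : G → ℤ, ∑ s ∈ S, k s • s = 0 → ∀ s ∈ S, k s • s = 0

/-- The compression of a set `A` along `s` (relative to the complementary set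
`T = S ∖ {s}`): in each coset `g + ⟨s⟩` with `g ∈ ⟨T⟩`, the set `A` is replaced by the
arithmetic progression `{g, g+s, …, g+(k_g-1)s}` where `k_g = |A ∩ (g + ⟨s⟩)|`. -/
def compress {G : Type*} [AddCommGroup G] (s : G) (T : Set G) (A : Set G) : Set G :=
  ⋃ g ∈ (AddSubgroup.closure T : Set G),
    {x : G | ∃ k : ℕ, x = g + k • s ∧
      k < Nat.card {a : G // a ∈ A ∧ a - g ∈ AddSubgroup.zmultiples s}}

section Aux

variable {G : Type*} [AddCommGroup G] [DecidableEq G]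

/-- The size of the fiber of `A` over the coset `g + ⟨si⟩`. -/
noncomputable def coreM (A : Finset G) (si g : G) : ℕ :=
  Nat.card {a : G // a ∈ (A : Set G) ∧ a - g ∈ AddSubgroup.zmultiples si}

lemma coreM_eq_card (A : Finset G) (si g : G)
    [DecidablePred (fun a => a - g ∈ AddSubgroup.zmultiples si)] :
    coreM A si g = (A.filter (fun a => a - g ∈ AddSubgroup.zmultiples si)).card := by
  rw [coreM, Nat.card_congr (Equiv.subtypeEquivRight
    (p := fun a => a ∈ (A : Set G) ∧ a - g ∈ AddSubgroup.zmultiples si)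
    (q := fun a => a ∈ A.filter (fun a => a - g ∈ AddSubgroup.zmultiples si))
    (fun a => by simp))]
  exact Nat.card_eq_finsetCard _

/-- If the order of `si` is positive, natural multiples below it are distinguished;
for order zero they always are. -/
lemma aux_inj' (si : G) (k k' : ℕ) (hle : k' ≤ k) (h : k • si = k' • si)
    (hb : addOrderOf si = 0 ∨ k < addOrderOf si) : k = k' := by
  have h0 : (k - k') • si = 0 := by rw [sub_nsmul si hle, h]; simp
  rcases hb with hb | hb
  · have : k - k' = 0 := by
      by_contra hne
      exact (addOrderOf_eq_zero_iff'.mp hb _ (Nat.pos_of_ne_zero hne)) h0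
    omega
  · have hdvd := addOrderOf_dvd_of_nsmul_eq_zero h0
    have hlt : k - k' < addOrderOf si := lt_of_le_of_lt (Nat.sub_le _ _) hb
    have := Nat.eq_zero_of_dvd_of_lt hdvd
    rcases Nat.eq_zero_or_pos (k - k') with h' | h'
    · omega
    · have := Nat.le_of_dvd h' hdvd
      omega

lemma aux_inj (si : G) (k k' : ℕ) (h : k • si = k' • si)
    (hb : addOrderOf si = 0 ∨ (k < addOrderOf si ∧ k' < addOrderOf si)) : k = k' := by
  rcases le_total k' k with hle | hle
  · exact aux_inj' si k k' hle h (by tauto)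
  · exact (aux_inj' si k' k hle h.symm (by tauto)).symm

lemma aux_disj (S : Finset G) (hind : IsIndependent S) (si : G) (hi : si ∈ S) :
    ∀ h ∈ AddSubgroup.closure ((S.erase si : Finset G) : Set G),
      h ∈ AddSubgroup.zmultiples si → h = 0 := by
  classical
  intro h hmem hz
  obtain ⟨z, hzsi⟩ := AddSubgroup.mem_zmultiples_iff.mp hz
  rw [← Submodule.span_int_eq_addSubgroupClosure] at hmem
  obtain ⟨f, -, hf⟩ := Submodule.mem_span_finset.mp hmem
  set k : G → ℤ := fun t => if t = si then -z else f t with hk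
  have hsum : ∑ s ∈ S, k s • s = 0 := by
    rw [← Finset.sum_erase_add S _ hi]
    have h1 : ∑ t ∈ S.erase si, k t • t = h := by
      rw [← hf]
      refine Finset.sum_congr rfl fun t ht => ?_
      have : t ≠ si := Finset.ne_of_mem_erase ht
      simp [hk, this]
    rw [h1]
    simp [hk, neg_zsmul, hzsi]
  have := hind k hsum si hi
  simp only [hk, if_pos rfl, neg_zsmul, neg_eq_zero] at this
  rw [← hzsi, this]

lemma aux_ex (S : Finset G) (hgen : AddSubgroup.closure (S : Set G) = ⊤) (si : G) :
    ∀ x : G, ∃ h, h ∈ AddSubgroup.closure ((S.erase si : Finset G) : Set G) ∧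
      x - h ∈ AddSubgroup.zmultiples si := by
  classical
  intro x
  have hle : AddSubgroup.closure (S : Set G) ≤
      AddSubgroup.closure ((S.erase si : Finset G) : Set G) ⊔ AddSubgroup.zmultiples si := by
    rw [AddSubgroup.closure_le]
    intro s hs
    by_cases h : s = si
    · rw [h]
      exact AddSubgroup.mem_sup_right (AddSubgroup.mem_zmultiples si)
    · refine AddSubgroup.mem_sup_left (AddSubgroup.subset_closure ?_)
      simpa [Finset.mem_erase, h] using hs
  have hx : x ∈ AddSubgroup.closure ((S.erase si : Finset G) : Set G) ⊔
      AddSubgroup.zmultiples si := hle (by rw [hgen]; trivial)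
  obtain ⟨y, hy, z, hz, hyz⟩ := AddSubgroup.mem_sup.mp hx
  exact ⟨y, hy, by rw [← hyz]; simpa using hz⟩

end Aux

/-- **Claim 2.2 (first part).** Let `S` be a finite independent generating subset of an
abelian group `G`, let `A ⊆ G` be finite, and let `sᵢ, sⱼ ∈ S`. Then
`|{a ∈ [A]_i : a + sⱼ ∉ [A]_i}| ≤ |{a ∈ A : a + sⱼ ∉ A}|`. -/
theorem compress_boundary_single {G : Type*} [AddCommGroup G] [DecidableEq G]
    (S : Finset G) (hind : IsIndependent S)
    (hgen : AddSubgroup.closure (S : Set G) = ⊤)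
    (A : Finset G) (si sj : G) (hi : si ∈ S) (hj : sj ∈ S) :
    Nat.card {a : G // a ∈ compress si (↑(S.erase si)) (↑A : Set G) ∧
        a + sj ∉ compress si (↑(S.erase si)) (↑A : Set G)}
      ≤ Nat.card {a : G // a ∈ A ∧ a + sj ∉ A} := by
  classical
  set H : AddSubgroup G := AddSubgroup.closure ((S.erase si : Finset G) : Set G) with hHdef
  have hdisj := aux_disj S hind si hi
  have hsub : ∀ {x y : G}, x ∈ H → y ∈ H → x - y ∈ AddSubgroup.zmultiples si → x = y := by
    intro x y hx hy hxy
    exact sub_eq_zero.mp (hdisj _ (sub_mem hx hy) hxy)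
  obtain ⟨q, hqH, hqZ⟩ : ∃ q : G → G, (∀ x, q x ∈ H) ∧
      (∀ x, x - q x ∈ AddSubgroup.zmultiples si) := by
    choose q h1 h2 using aux_ex S hgen si
    exact ⟨q, h1, h2⟩
  have quniq : ∀ x g, g ∈ H → x - g ∈ AddSubgroup.zmultiples si → q x = g := by
    intro x g hg hxg
    refine hsub (hqH x) hg ?_
    have h : q x - g = (x - g) - (x - q x) := by abel
    rw [h]
    exact sub_mem hxg (hqZ x)
  have hkZ : ∀ k : ℕ, (k • si : G) ∈ AddSubgroup.zmultiples si := fun k =>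
    AddSubgroup.mem_zmultiples_iff.mpr ⟨(k : ℤ), natCast_zsmul si k⟩
  -- fiber sizes
  set m : G → ℕ := fun g => coreM A si g with hm
  have hmcard : ∀ g : G, m g = (A.filter (fun a => a - g ∈ AddSubgroup.zmultiples si)).card :=
    fun g => coreM_eq_card A si g
  -- representation in a coset, when the order is finite
  have hrep : ∀ g a : G, a - g ∈ AddSubgroup.zmultiples si → 0 < addOrderOf si →
      ∃ k, k < addOrderOf si ∧ a = g + k • si := by
    intro g a haz hd0
    obtain ⟨z, hz⟩ := AddSubgroup.mem_zmultiples_iff.mp haz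
    have hdne : ((addOrderOf si : ℤ)) ≠ 0 := by exact_mod_cast hd0.ne'
    have h1 : 0 ≤ z % (addOrderOf si : ℤ) := Int.emod_nonneg z hdne
    have h2 : z % (addOrderOf si : ℤ) < (addOrderOf si : ℤ) :=
      Int.emod_lt_of_pos z (by exact_mod_cast hd0)
    refine ⟨(z % (addOrderOf si : ℤ)).toNat, by omega, ?_⟩
    have hdsi : ((addOrderOf si : ℤ)) • si = 0 := by
      rw [natCast_zsmul]; exact addOrderOf_nsmul_eq_zero si
    have key : ((z % (addOrderOf si : ℤ)).toNat : ℕ) • si = a - g := by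
      rw [← natCast_zsmul, Int.toNat_of_nonneg h1, ← hz]
      conv_rhs => rw [← Int.emod_add_mul_ediv z (addOrderOf si : ℤ)]
      rw [add_zsmul]
      have : ((addOrderOf si : ℤ) * (z / (addOrderOf si : ℤ))) • si =
          (z / (addOrderOf si : ℤ)) • (((addOrderOf si : ℤ)) • si) := by
        rw [mul_comm, mul_zsmul]
      rw [this, hdsi, smul_zero, add_zero]
    rw [key]; abel
  have hmled : 0 < addOrderOf si → ∀ g : G, m g ≤ addOrderOf si := by
    intro hd0 g
    rw [hmcard]
    have hss : A.filter (fun a => a - g ∈ AddSubgroup.zmultiples si) ⊆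
        (Finset.range (addOrderOf si)).image (fun k => g + k • si) := by
      intro a ha
      rw [Finset.mem_filter] at ha
      obtain ⟨k, hk1, hk2⟩ := hrep g a ha.2 hd0
      exact Finset.mem_image.mpr ⟨k, Finset.mem_range.mpr hk1, hk2.symm⟩
    calc (A.filter (fun a => a - g ∈ AddSubgroup.zmultiples si)).card
        ≤ _ := Finset.card_le_card hss
      _ ≤ (Finset.range (addOrderOf si)).card := Finset.card_image_le
      _ = addOrderOf si := by simp
  -- the finite set of relevant coset representatives
  set Q : Finset G := A.image q with hQ
  have hQH : ∀ g ∈ Q, g ∈ H := by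
    intro g hg
    obtain ⟨a, _, rfl⟩ := Finset.mem_image.mp hg
    exact hqH a
  have hgQ : ∀ g, g ∈ H → 0 < m g → g ∈ Q := by
    intro g hgH hpos
    rw [hmcard] at hpos
    obtain ⟨a, ha⟩ := Finset.card_pos.mp hpos
    rw [Finset.mem_filter] at ha
    exact Finset.mem_image.mpr ⟨a, ha.1, quniq a g hgH ha.2⟩
  -- the compressed set as a finset
  set CB : Finset G := Q.biUnion (fun g => (Finset.range (m g)).image (fun k => g + k • si))
    with hCBdef
  have hCBin : ∀ g k, g ∈ H → k < m g → g + k • si ∈ CB := by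
    intro g k hgH hk
    exact Finset.mem_biUnion.mpr ⟨g, hgQ g hgH (lt_of_le_of_lt (Nat.zero_le k) hk),
      Finset.mem_image.mpr ⟨k, Finset.mem_range.mpr hk, rfl⟩⟩
  have hCBout : ∀ x ∈ CB, q x ∈ Q ∧ ∃ k, k < m (q x) ∧ x = q x + k • si := by
    intro x hx
    obtain ⟨g, hgQ', hx'⟩ := Finset.mem_biUnion.mp hx
    obtain ⟨k, hk, rfl⟩ := Finset.mem_image.mp hx'
    have hqx : q (g + k • si) = g := quniq _ _ (hQH g hgQ') (by simpa using hkZ k)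
    rw [hqx]
    exact ⟨hgQ', k, Finset.mem_range.mp hk, rfl⟩
  have hCB : (CB : Set G) = compress si (↑(S.erase si)) (↑A : Set G) := by
    ext x
    simp only [compress, Set.mem_iUnion, SetLike.mem_coe, Finset.mem_coe, Set.mem_setOf_eq,
      exists_prop]
    constructor
    · intro hx
      obtain ⟨hQx, k, hk, hxe⟩ := hCBout x hx
      exact ⟨q x, hQH _ hQx, k, hxe, hk⟩
    · rintro ⟨g, hgH, k, rfl, hk⟩
      exact hCBin g k hgH hk
  -- reduce to finsets
  have eL : Nat.card {a : G // a ∈ compress si (↑(S.erase si)) (↑A : Set G) ∧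
      a + sj ∉ compress si (↑(S.erase si)) (↑A : Set G)} =
      (CB.filter (fun x => x + sj ∉ CB)).card := by
    rw [Nat.card_congr (Equiv.subtypeEquivRight
      (p := fun a => a ∈ compress si (↑(S.erase si)) (↑A : Set G) ∧
        a + sj ∉ compress si (↑(S.erase si)) (↑A : Set G))
      (q := fun a => a ∈ CB.filter (fun x => x + sj ∉ CB)) (fun a => by
        rw [← hCB]; simp [Finset.mem_filter]))]
    exact Nat.card_eq_finsetCard _
  have eR : Nat.card {a : G // a ∈ A ∧ a + sj ∉ A} =
      (A.filter (fun a => a + sj ∉ A)).card := by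
    rw [Nat.card_congr (Equiv.subtypeEquivRight
      (p := fun a => a ∈ A ∧ a + sj ∉ A)
      (q := fun a => a ∈ A.filter (fun a => a + sj ∉ A)) (fun a => by simp))]
    exact Nat.card_eq_finsetCard _
  rw [eL, eR]
  rw [Finset.card_eq_sum_card_fiberwise (f := q) (t := Q)
    (fun x hx => (hCBout x (Finset.mem_filter.mp hx).1).1)]
  rw [Finset.card_eq_sum_card_fiberwise (f := q) (t := Q)
    (fun a ha => Finset.mem_image_of_mem q (Finset.mem_filter.mp ha).1)]
  refine Finset.sum_le_sum ?_
  intro g hgQ'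
  have hgH : g ∈ H := hQH g hgQ'
  have hgpos : 0 < m g := by
    obtain ⟨a, haA, rfl⟩ := Finset.mem_image.mp hgQ'
    rw [hmcard]
    exact Finset.card_pos.mpr ⟨a, Finset.mem_filter.mpr ⟨haA, hqZ a⟩⟩
  have hqg : ∀ k : ℕ, q (g + k • si) = g := fun k => quniq _ _ hgH (by simpa using hkZ k)
  have hfib : ∀ x : G, (x ∈ (CB.filter fun y => y + sj ∉ CB).filter (fun y => q y = g)) ↔
      ∃ k, k < m g ∧ x = g + k • si ∧ (g + k • si) + sj ∉ CB := by
    intro x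
    constructor
    · intro hx
      rw [Finset.mem_filter, Finset.mem_filter] at hx
      obtain ⟨⟨hxCB, hxb⟩, hxq⟩ := hx
      obtain ⟨_, k, hk, hxe⟩ := hCBout x hxCB
      rw [hxq] at hk hxe
      exact ⟨k, hk, hxe, by rw [← hxe]; exact hxb⟩
    · rintro ⟨k, hk, rfl, hb⟩
      rw [Finset.mem_filter, Finset.mem_filter]
      exact ⟨⟨hCBin g k hgH hk, hb⟩, hqg k⟩
  by_cases hc : sj = si
  · -- case `sj = si`
    subst hc
    by_cases hfull : 0 < addOrderOf sj ∧ m g = addOrderOf sj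
    · -- the coset is full: no boundary in the compressed set
      have hempty : (CB.filter fun y => y + sj ∉ CB).filter (fun y => q y = g) = ∅ := by
        rw [Finset.eq_empty_iff_forall_notMem]
        intro x hx
        obtain ⟨k, hk, hxe, hb⟩ := (hfib x).mp hx
        apply hb
        have hmod : (g + k • sj) + sj = g + (((k + 1) % addOrderOf sj) • sj) := by
          rw [add_assoc, ← succ_nsmul]
          congr 1
          conv_lhs => rw [← Nat.mod_add_div (k + 1) (addOrderOf sj)]
          rw [add_nsmul]
          have : (addOrderOf sj * ((k + 1) / addOrderOf sj)) • sj =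
              ((k + 1) / addOrderOf sj) • (addOrderOf sj • sj) := by
            rw [mul_nsmul]
          rw [this, addOrderOf_nsmul_eq_zero, smul_zero, add_zero]
        rw [hmod]
        exact hCBin g _ hgH (by rw [hfull.2]; exact Nat.mod_lt _ hfull.1)
      rw [hempty]
      simp
    · -- the coset is not full: at most one boundary element in the compressed set,
      -- at least one in the original
      have hord : addOrderOf sj = 0 ∨ m g < addOrderOf sj := by
        rcases Nat.eq_zero_or_pos (addOrderOf sj) with h0 | h0
        · exact Or.inl h0
        · exact Or.inr (lt_of_le_of_ne (hmled h0 g) (fun h => hfull ⟨h0, h⟩))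
      have hDC1 : (CB.filter fun y => y + sj ∉ CB).filter (fun y => q y = g) ⊆
          {g + (m g - 1) • sj} := by
        intro x hx
        obtain ⟨k, hk, hxe, hb⟩ := (hfib x).mp hx
        have hnk : ¬ (k + 1 < m g) := fun h =>
          hb (by rw [add_assoc, ← succ_nsmul]; exact hCBin g (k + 1) hgH h)
        have : k = m g - 1 := by omega
        rw [Finset.mem_singleton, hxe, this]
      have hDA : ((A.filter fun a => a + sj ∉ A).filter fun a => q a = g).Nonempty := by
        by_contra hne
        rw [Finset.not_nonempty_iff_eq_empty, Finset.eq_empty_iff_forall_notMem] at hne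
        have hstep : ∀ a, a ∈ A → a - g ∈ AddSubgroup.zmultiples sj →
            (a + sj ∈ A ∧ a + sj - g ∈ AddSubgroup.zmultiples sj) := by
          intro a haA haZ
          have hqa : q a = g := quniq a g hgH haZ
          have hin : a + sj ∈ A := by
            by_contra hns
            refine hne a ?_
            rw [Finset.mem_filter, Finset.mem_filter]
            exact ⟨⟨haA, hns⟩, hqa⟩
          refine ⟨hin, ?_⟩
          have h : a + sj - g = (a - g) + sj := by abel
          rw [h]
          exact add_mem haZ (AddSubgroup.mem_zmultiples sj)
        have hgpos' := hgpos
        rw [hmcard] at hgpos'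
        obtain ⟨a0, ha0⟩ := Finset.card_pos.mp hgpos'
        rw [Finset.mem_filter] at ha0
        have hchain : ∀ k : ℕ, a0 + k • sj ∈ A ∧
            a0 + k • sj - g ∈ AddSubgroup.zmultiples sj := by
          intro k
          induction k with
          | zero => simpa using ha0
          | succ n ih =>
            have h := hstep _ ih.1 ih.2
            constructor
            · rw [succ_nsmul, ← add_assoc]; exact h.1
            · rw [succ_nsmul, ← add_assoc]; exact h.2
        rcases hord with h0 | hlt
        · -- infinite order gives infinitely many elements of `A`
          obtain ⟨k, k', hkk, he⟩ := Finite.exists_ne_map_eq_of_infinite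
            (fun k : ℕ => (⟨a0 + k • sj, (hchain k).1⟩ : {x // x ∈ A}))
          apply hkk
          have he' : a0 + k • sj = a0 + k' • sj := by simpa using he
          exact aux_inj sj k k' (add_left_cancel he') (Or.inl h0)
        · -- finite order: the whole coset would be inside `A`
          have hd0 : 0 < addOrderOf sj := lt_of_le_of_lt (Nat.zero_le _) hlt
          have hsubset : (Finset.range (addOrderOf sj)).image (fun k => a0 + k • sj) ⊆
              A.filter (fun a => a - g ∈ AddSubgroup.zmultiples sj) := by
            intro x hx
            obtain ⟨k, hk, rfl⟩ := Finset.mem_image.mp hx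
            rw [Finset.mem_filter]
            exact hchain k
          have hinjim : ((Finset.range (addOrderOf sj)).image
              (fun k => a0 + k • sj)).card = addOrderOf sj := by
            rw [Finset.card_image_of_injOn, Finset.card_range]
            intro k hk k' hk' he
            simp only [Finset.coe_range, Set.mem_Iio] at hk hk'
            exact aux_inj sj k k' (add_left_cancel he) (Or.inr ⟨hk, hk'⟩)
          have : addOrderOf sj ≤ m g := by
            rw [hmcard, ← hinjim]
            exact Finset.card_le_card hsubset
          omega
      calc ((CB.filter fun y => y + sj ∉ CB).filter (fun y => q y = g)).card
          ≤ ({g + (m g - 1) • sj} : Finset G).card := Finset.card_le_card hDC1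
        _ = 1 := Finset.card_singleton _
        _ ≤ _ := Finset.card_pos.mpr hDA
  · -- case `sj ≠ si`
    have hjT : sj ∈ S.erase si := Finset.mem_erase.mpr ⟨hc, hj⟩
    have hjH : sj ∈ H := AddSubgroup.subset_closure (by exact_mod_cast hjT)
    have hg'H : g + sj ∈ H := add_mem hgH hjH
    have h1 : ∀ k : ℕ, (addOrderOf si = 0 ∨ k < addOrderOf si) →
        ((g + sj) + k • si ∈ CB ↔ k < m (g + sj)) := by
      intro k hkb
      constructor
      · intro hmem
        obtain ⟨_, k', hk', he⟩ := hCBout _ hmem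
        have hq' : q ((g + sj) + k • si) = g + sj := quniq _ _ hg'H (by simpa using hkZ k)
        rw [hq'] at hk' he
        have hkk : k = k' := by
          refine aux_inj si k k' (add_left_cancel he) ?_
          rcases hkb with h0 | hkd
          · exact Or.inl h0
          · have hd0 : 0 < addOrderOf si := lt_of_le_of_lt (Nat.zero_le _) hkd
            exact Or.inr ⟨hkd, lt_of_lt_of_le hk' (hmled hd0 _)⟩
        omega
      · intro hk
        exact hCBin _ k hg'H hk
    have hbnd : ∀ k : ℕ, k < m g → (addOrderOf si = 0 ∨ k < addOrderOf si) := by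
      intro k hk
      rcases Nat.eq_zero_or_pos (addOrderOf si) with h0 | h0
      · exact Or.inl h0
      · exact Or.inr (lt_of_lt_of_le hk (hmled h0 g))
    have hcomm : ∀ k : ℕ, (g + k • si) + sj = (g + sj) + k • si := by
      intro k; abel
    have hDCeq : (CB.filter fun y => y + sj ∉ CB).filter (fun y => q y = g) =
        ((Finset.range (m g)) \ (Finset.range (m (g + sj)))).image (fun k => g + k • si) := by
      ext x
      rw [hfib]
      simp only [Finset.mem_image, Finset.mem_sdiff, Finset.mem_range]
      constructor
      · rintro ⟨k, hk, hxe, hb⟩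
        refine ⟨k, ⟨hk, fun hk' => hb ?_⟩, hxe.symm⟩
        rw [hcomm]
        exact (h1 k (hbnd k hk)).mpr hk'
      · rintro ⟨k, ⟨hk, hk'⟩, hxe⟩
        refine ⟨k, hk, hxe.symm, fun hmem => hk' ?_⟩
        rw [hcomm] at hmem
        exact (h1 k (hbnd k hk)).mp hmem
    have hDCcard : ((CB.filter fun y => y + sj ∉ CB).filter (fun y => q y = g)).card =
        m g - m (g + sj) := by
      have hinjOn : Set.InjOn (fun k : ℕ => g + k • si)
          ↑(Finset.range (m g) \ Finset.range (m (g + sj))) := by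
        intro k hk k' hk' he
        simp only [Finset.coe_sdiff, Finset.coe_range, Set.mem_diff, Set.mem_Iio] at hk hk'
        refine aux_inj si k k' (add_left_cancel he) ?_
        rcases hbnd k hk.1 with h0 | hkd
        · exact Or.inl h0
        · rcases hbnd k' hk'.1 with h0 | hkd'
          · exact Or.inl h0
          · exact Or.inr ⟨hkd, hkd'⟩
      have hico : Finset.range (m g) \ Finset.range (m (g + sj)) =
          Finset.Ico (m (g + sj)) (m g) := by
        ext k
        simp only [Finset.mem_sdiff, Finset.mem_range, Finset.mem_Ico]
        omega
      rw [hDCeq, Finset.card_image_of_injOn hinjOn, hico, Nat.card_Ico]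
    have hmapsub : ((A.filter fun a => a - g ∈ AddSubgroup.zmultiples si).filter
        fun a => a + sj ∈ A).card ≤ m (g + sj) := by
      rw [hmcard]
      apply Finset.card_le_card_of_injOn (fun a => a + sj)
      · intro a ha
        rw [Finset.mem_coe, Finset.mem_filter, Finset.mem_filter] at ha
        rw [Finset.mem_coe, Finset.mem_filter]
        refine ⟨ha.2, ?_⟩
        have h : a + sj - (g + sj) = a - g := by abel
        rw [h]
        exact ha.1.2
      · intro a _ b _ h
        exact add_right_cancel h
    have hsplit : ((A.filter fun a => a - g ∈ AddSubgroup.zmultiples si).filter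
          fun a => a + sj ∈ A).card +
        ((A.filter fun a => a - g ∈ AddSubgroup.zmultiples si).filter
          fun a => ¬(a + sj ∈ A)).card =
        (A.filter fun a => a - g ∈ AddSubgroup.zmultiples si).card :=
      Finset.card_filter_add_card_filter_not _
    have hDAeq : (A.filter fun a => a + sj ∉ A).filter (fun a => q a = g) =
        (A.filter fun a => a - g ∈ AddSubgroup.zmultiples si).filter
          fun a => ¬(a + sj ∈ A) := by
      ext a
      simp only [Finset.mem_filter]
      constructor
      · rintro ⟨⟨haA, hb⟩, hq⟩
        exact ⟨⟨haA, by rw [← hq]; exact hqZ a⟩, hb⟩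
      · rintro ⟨⟨haA, hz⟩, hb⟩
        exact ⟨⟨haA, hb⟩, quniq a g hgH hz⟩
    have hmg : m g = (A.filter fun a => a - g ∈ AddSubgroup.zmultiples si).card := hmcard g
    rw [hDCcard, hDAeq]
    omega
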